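/- Let B be a complex unital Banach algebra and x, y ∈ B with x·y = q⁻¹·(y·x) for some q ∈ ℂ with q ≠ 0 and |q| ≠ 1. Then the spectrum of x·y equals {0}. -/

import Mathlib

/-- In a complex unital Banach algebra, if `x * y = q⁻¹ • (y * x)` with `q ≠ 0` and `|q| ≠ 1`,
then the spectrum of `x * y` equals `{0}`. -/
theorem spectrum_xy_eq_zero {B : Type*} [NormedRing B] [NormedAlgebra ℂ B]
    [CompleteSpace B] [Nontrivial B]
    (q : ℂ) (hq0 : q ≠ 0) (hq1 : ‖q‖ ≠ 1) (x y : B) (h : x * y = q⁻¹ • (y * x)) :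
    spectrum ℂ (x * y) = {0} := by
  have hne : (spectrum ℂ (x * y)).Nonempty := spectrum.nonempty _
  have hyx : y * x = q • (x * y) := by
    rw [h, smul_smul, mul_inv_cancel₀ hq0, one_smul]
  have hmem : ∀ z : ℂ, q * z ∈ spectrum ℂ (y * x) ↔ z ∈ spectrum ℂ (x * y) := by
    intro z
    have := @spectrum.smul_mem_smul_iff ℂ B _ _ _ (x * y) z (Units.mk0 q hq0)
    simpa [hyx, Units.smul_def, smul_eq_mul] using this
  have hswap := spectrum.nonzero_mul_comm (𝕜 := ℂ) x y
  -- step up: multiply by q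
  have step1 : ∀ z ∈ spectrum ℂ (x * y), z ≠ 0 → q * z ∈ spectrum ℂ (x * y) := by
    intro z hz hz0
    have h1 : q * z ∈ spectrum ℂ (y * x) := (hmem z).mpr hz
    have h2 : q * z ∈ spectrum ℂ (y * x) \ {0} :=
      ⟨h1, by simp [mul_ne_zero hq0 hz0]⟩
    rw [← hswap] at h2
    exact h2.1
  -- step down: multiply by q⁻¹
  have step2 : ∀ z ∈ spectrum ℂ (x * y), z ≠ 0 → q⁻¹ * z ∈ spectrum ℂ (x * y) := by
    intro z hz hz0
    have h1 : z ∈ spectrum ℂ (x * y) \ {0} := ⟨hz, by simp [hz0]⟩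
    rw [hswap] at h1
    have h2 : q * (q⁻¹ * z) ∈ spectrum ℂ (y * x) := by
      rw [mul_inv_cancel_left₀ hq0]; exact h1.1
    exact (hmem _).mp h2
  rw [Set.eq_singleton_iff_nonempty_unique_mem]
  refine ⟨hne, fun z hz => ?_⟩
  by_contra hz0
  -- choose r with ‖r‖ > 1 and step
  obtain ⟨r, hr0, hr1, hstep⟩ :
      ∃ r : ℂ, r ≠ 0 ∧ 1 < ‖r‖ ∧
        ∀ w ∈ spectrum ℂ (x * y), w ≠ 0 → r * w ∈ spectrum ℂ (x * y) := by
    rcases lt_or_gt_of_ne hq1 with hlt | hgt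
    · refine ⟨q⁻¹, inv_ne_zero hq0, ?_, step2⟩
      rw [norm_inv]
      exact (one_lt_inv₀ (norm_pos_iff.mpr hq0)).mpr hlt
    · exact ⟨q, hq0, hgt, step1⟩
  have key : ∀ n : ℕ, r ^ n * z ∈ spectrum ℂ (x * y) := by
    intro n
    induction n with
    | zero => simpa using hz
    | succ n ih =>
        have := hstep _ ih (mul_ne_zero (pow_ne_zero n hr0) hz0)
        rw [← mul_assoc, ← pow_succ'] at this
        exact this
  have hbound : ∀ n : ℕ, ‖r‖ ^ n * ‖z‖ ≤ ‖x * y‖ * ‖(1 : B)‖ := by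
    intro n
    have := spectrum.norm_le_norm_mul_of_mem (key n)
    simpa [norm_mul, norm_pow] using this
  obtain ⟨n, hn⟩ := pow_unbounded_of_one_lt (‖x * y‖ * ‖(1 : B)‖ / ‖z‖) hr1
  have hz0' : 0 < ‖z‖ := norm_pos_iff.mpr hz0
  have := hbound n
  rw [div_lt_iff₀ hz0'] at hn
  linarith
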